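/- Duality for the minimal connection: for points a¹,…,aᵐ, b¹,…,bᵐ ∈ ℝ³, the supremum over 1-Lipschitz functions ξ : ℝ³ → ℝ of Σⱼ ξ(aʲ) − Σⱼ ξ(bʲ) equals min_{π ∈ S_m} Σⱼ |aʲ − b^{π(j)}|. -/
import Mathlib


open Finset

namespace MinConnAux

variable {m : ℕ}

/-- Shortest-path style value function: `V a b σ [k₁,…,k_r] x` is the cost of the
path that starts at `a (k_r)`, uses the negative edge to `b (σ k_r)`, walks to
`a (k_{r-1})`, …, uses the negative edge `a k₁ → b (σ k₁)`, and finally walks to `x`. -/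
noncomputable def V (a b : Fin m → EuclideanSpace ℝ (Fin 3)) (σ : Fin m → Fin m) :
    List (Fin m) → EuclideanSpace ℝ (Fin 3) → ℝ
  | [], _ => 0
  | j :: L, x => V a b σ L (a j) - dist (a j) (b (σ j)) + dist (b (σ j)) x

variable (a b : Fin m → EuclideanSpace ℝ (Fin 3)) (σ : Fin m → Fin m)

lemma V_le (L : List (Fin m)) (x y : EuclideanSpace ℝ (Fin 3)) :
    V a b σ L x ≤ V a b σ L y + dist x y := by
  cases L with
  | nil => simpa [V] using dist_nonneg
  | cons j L =>
      have h := dist_triangle (b (σ j)) y x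
      rw [dist_comm y x] at h
      simp only [V]
      linarith

lemma V_append (j : Fin m) :
    ∀ (M Q : List (Fin m)) (x : EuclideanSpace ℝ (Fin 3)),
      V a b σ ((M ++ [j]) ++ Q) x = V a b σ (M ++ [j]) x + V a b σ Q (a j)
  | [], Q, x => by simp [V]; ring
  | k :: M', Q, x => by
      simp only [List.cons_append, V, List.append_eq]
      rw [V_append j M' Q (a k)]
      ring

lemma sum_sub_sum_of_eq_off {f g : Fin m → ℝ} {k j : Fin m} (hkj : k ≠ j)
    (h : ∀ l, l ≠ k → l ≠ j → f l = g l) :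
    (∑ l, f l) - (∑ l, g l) = (f k - g k) + (f j - g j) := by
  rw [← Finset.sum_sub_distrib,
    ← Finset.sum_subset (Finset.subset_univ ({k, j} : Finset (Fin m)))
      (fun x _ hx => by
        simp only [Finset.mem_insert, Finset.mem_singleton, not_or] at hx
        rw [h x hx.1 hx.2, sub_self]),
    Finset.sum_pair hkj]

lemma V_cycle :
    ∀ (M : List (Fin m)) (j : Fin m), (M ++ [j]).Nodup →
    ∃ τ : Equiv.Perm (Fin m),
      (∀ l, l ∉ M ++ [j] → τ l = l) ∧ τ j = (M ++ [j]).headD j ∧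
      ∀ x, V a b σ (M ++ [j]) x
        = ((∑ l, dist (a l) (b (σ (τ l)))) - ∑ l, dist (a l) (b (σ l)))
          + dist (b (σ ((M ++ [j]).headD j))) x
          - dist (a j) (b (σ ((M ++ [j]).headD j)))
  | [], j, _ => by
      refine ⟨1, by simp, by simp, fun x => ?_⟩
      simp only [List.nil_append, List.headD_cons, Equiv.Perm.one_apply, V, sub_self,
        zero_sub]
      ring
  | k :: M', j, hnd => by
      rw [List.cons_append, List.nodup_cons] at hnd
      obtain ⟨hk, hnd'⟩ := hnd
      obtain ⟨τ', hτsupp, hτj, hτV⟩ := V_cycle M' j hnd'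
      set h' := (M' ++ [j]).headD j with hh'
      have hh'mem : h' ∈ M' ++ [j] := by cases M' <;> simp [hh']
      have hjmem : j ∈ M' ++ [j] := by simp
      have hkj : k ≠ j := fun h => hk (h ▸ hjmem)
      have hkh' : k ≠ h' := fun h => hk (h ▸ hh'mem)
      have hτ'k : τ' k = k := hτsupp k hk
      refine ⟨Equiv.swap k h' * τ', ?_, ?_, ?_⟩
      · intro l hl
        rw [List.cons_append, List.mem_cons, not_or] at hl
        have h1 : τ' l = l := hτsupp l hl.2
        have h2 : l ≠ h' := fun h => hl.2 (h ▸ hh'mem)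
        simp [Equiv.Perm.mul_apply, h1, Equiv.swap_apply_of_ne_of_ne hl.1 h2]
      · simp [Equiv.Perm.mul_apply, hτj, ← hh', Equiv.swap_apply_right]
      · intro x
        have key : (∑ l, dist (a l) (b (σ ((Equiv.swap k h' * τ') l))))
              - (∑ l, dist (a l) (b (σ l)))
            = ((∑ l, dist (a l) (b (σ (τ' l)))) - ∑ l, dist (a l) (b (σ l)))
              + ((dist (a k) (b (σ h')) - dist (a k) (b (σ k)))
                + (dist (a j) (b (σ k)) - dist (a j) (b (σ h')))) := by
          have e1 : (∑ l, dist (a l) (b (σ ((Equiv.swap k h' * τ') l))))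
              - (∑ l, dist (a l) (b (σ (τ' l))))
              = ((dist (a k) (b (σ ((Equiv.swap k h' * τ') k)))
                    - dist (a k) (b (σ (τ' k))))
                + (dist (a j) (b (σ ((Equiv.swap k h' * τ') j)))
                    - dist (a j) (b (σ (τ' j))))) := by
            apply sum_sub_sum_of_eq_off hkj
            intro l hlk hlj
            have h1 : τ' l ≠ k := fun h => hlk (τ'.injective (h.trans hτ'k.symm))
            have h2 : τ' l ≠ h' := fun h => hlj (τ'.injective (h.trans hτj.symm))
            rw [Equiv.Perm.mul_apply, Equiv.swap_apply_of_ne_of_ne h1 h2]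
          rw [Equiv.Perm.mul_apply, Equiv.Perm.mul_apply, hτ'k, hτj,
            Equiv.swap_apply_left, Equiv.swap_apply_right] at e1
          linarith
        have hV := hτV (a k)
        simp only [List.cons_append, V, List.append_eq, hV, List.headD_cons]
        rw [dist_comm (b (σ h')) (a k)] at *
        linarith [key]

lemma V_cycle_nonneg
    (hopt : ∀ π : Equiv.Perm (Fin m),
      (∑ l, dist (a l) (b (σ l))) ≤ ∑ l, dist (a l) (b (π l)))
    (σe : Equiv.Perm (Fin m)) (hσe : ∀ l, σe l = σ l)
    (M : List (Fin m)) (j : Fin m) (h : (M ++ [j]).Nodup) :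
    0 ≤ V a b σ (M ++ [j]) (a j) := by
  obtain ⟨τ, _, _, hV⟩ := V_cycle a b σ M j h
  have hle : (∑ l, dist (a l) (b (σ l))) ≤ ∑ l, dist (a l) (b (σ (τ l))) := by
    have := hopt (σe * τ)
    simpa [Equiv.Perm.mul_apply, hσe] using this
  have hd := dist_comm (b (σ ((M ++ [j]).headD j))) (a j)
  rw [hV (a j)]
  rw [hd, dist_comm (a j) (b (σ ((M ++ [j]).headD j)))]
  linarith

end MinConnAux

open MinConnAux in
/-- Duality for the minimal connection: the supremum over 1-Lipschitz functions
`ξ : ℝ³ → ℝ` of `∑ⱼ ξ(aʲ) − ∑ⱼ ξ(bʲ)` equals the minimal connection length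
`min_π ∑ⱼ |aʲ − b^{π(j)}|`. -/
theorem minimal_connection_duality
    (m : ℕ) (a b : Fin m → EuclideanSpace ℝ (Fin 3)) :
    sSup {s : ℝ | ∃ ξ : EuclideanSpace ℝ (Fin 3) → ℝ, LipschitzWith 1 ξ ∧
        s = (∑ j, ξ (a j)) - (∑ j, ξ (b j))} =
      ⨅ π : Equiv.Perm (Fin m), ∑ j, dist (a j) (b (π j)) := by
  classical
  obtain ⟨σ, hσ⟩ :=
    Finite.exists_min (fun π : Equiv.Perm (Fin m) => ∑ j, dist (a j) (b (π j)))
  have hinf : (⨅ π : Equiv.Perm (Fin m), ∑ j, dist (a j) (b (π j)))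
      = ∑ j, dist (a j) (b (σ j)) := by
    refine le_antisymm (ciInf_le (Finite.bddBelow_range _) σ) (le_ciInf hσ)
  set S : Set ℝ := {s : ℝ | ∃ ξ : EuclideanSpace ℝ (Fin 3) → ℝ, LipschitzWith 1 ξ ∧
      s = (∑ j, ξ (a j)) - (∑ j, ξ (b j))} with hS
  -- upper bound
  have hub : ∀ s ∈ S, s ≤ ∑ j, dist (a j) (b (σ j)) := by
    rintro s ⟨ξ, hξ, rfl⟩
    have hre : ∑ j, ξ (b j) = ∑ j, ξ (b (σ j)) :=
      (Equiv.sum_comp σ (fun j => ξ (b j))).symm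
    rw [hre, ← Finset.sum_sub_distrib]
    refine Finset.sum_le_sum fun j _ => ?_
    have h := hξ.dist_le_mul (a j) (b (σ j))
    rw [Real.dist_eq] at h
    calc ξ (a j) - ξ (b (σ j)) ≤ |ξ (a j) - ξ (b (σ j))| := le_abs_self _
      _ ≤ dist (a j) (b (σ j)) := by simpa using h
  -- construction of the optimal Lipschitz function
  have hne : (Finset.univ : Finset {l : List (Fin m) // l.Nodup}).Nonempty :=
    ⟨⟨[], List.nodup_nil⟩, Finset.mem_univ _⟩
  set ξ : EuclideanSpace ℝ (Fin 3) → ℝ := fun x =>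
    Finset.univ.inf' hne (fun L : {l : List (Fin m) // l.Nodup} => V a b (⇑σ) L.1 x)
    with hξdef
  have hξle : ∀ (L : {l : List (Fin m) // l.Nodup}) x, ξ x ≤ V a b (⇑σ) L.1 x :=
    fun L x => Finset.inf'_le _ (Finset.mem_univ L)
  have hlipaux : ∀ x y, ξ x ≤ ξ y + dist x y := by
    intro x y
    obtain ⟨L, _, hL⟩ := Finset.exists_mem_eq_inf' hne
      (fun L : {l : List (Fin m) // l.Nodup} => V a b (⇑σ) L.1 y)
    calc ξ x ≤ V a b (⇑σ) L.1 x := hξle L x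
      _ ≤ V a b (⇑σ) L.1 y + dist x y := V_le a b (⇑σ) L.1 x y
      _ = ξ y + dist x y := by rw [hξdef]; rw [← hL]
  have hlip : LipschitzWith 1 ξ := by
    refine LipschitzWith.of_dist_le_mul fun x y => ?_
    rw [NNReal.coe_one, one_mul, Real.dist_eq, abs_sub_le_iff]
    constructor
    · linarith [hlipaux x y]
    · have := hlipaux y x
      rw [dist_comm y x] at this
      linarith
  have hkey : ∀ j, ξ (b (σ j)) + dist (a j) (b (σ j)) ≤ ξ (a j) := by
    intro j
    obtain ⟨L₀, _, hL₀⟩ := Finset.exists_mem_eq_inf' hne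
      (fun L : {l : List (Fin m) // l.Nodup} => V a b (⇑σ) L.1 (a j))
    have hξa : ξ (a j) = V a b (⇑σ) L₀.1 (a j) := hL₀
    by_cases hj : j ∈ L₀.1
    · obtain ⟨P, Q, hPQ⟩ := List.append_of_mem hj
      have hnodup : (P ++ j :: Q).Nodup := hPQ ▸ L₀.2
      have h1 : ((P ++ [j]) ++ Q).Nodup := by simpa using hnodup
      have hjQ : (j :: Q).Nodup := hnodup.of_append_right
      have hPj : (P ++ [j]).Nodup := h1.of_append_left
      have e1 : ξ (a j)
          = V a b (⇑σ) (P ++ [j]) (a j) + V a b (⇑σ) Q (a j) := by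
        rw [hξa, hPQ]
        have : P ++ j :: Q = (P ++ [j]) ++ Q := by simp
        rw [this, V_append]
      have h0 : 0 ≤ V a b (⇑σ) (P ++ [j]) (a j) :=
        V_cycle_nonneg a b (⇑σ) hσ σ (fun l => rfl) P j hPj
      have h2 : ξ (b (σ j)) ≤ V a b (⇑σ) (j :: Q) (b (σ j)) := hξle ⟨j :: Q, hjQ⟩ _
      have h3 : V a b (⇑σ) (j :: Q) (b (σ j))
          = V a b (⇑σ) Q (a j) - dist (a j) (b (σ j)) := by
        simp [V]
      linarith
    · have hcons : (j :: L₀.1).Nodup := List.nodup_cons.mpr ⟨hj, L₀.2⟩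
      have h2 : ξ (b (σ j)) ≤ V a b (⇑σ) (j :: L₀.1) (b (σ j)) :=
        hξle ⟨j :: L₀.1, hcons⟩ _
      have h3 : V a b (⇑σ) (j :: L₀.1) (b (σ j))
          = V a b (⇑σ) L₀.1 (a j) - dist (a j) (b (σ j)) := by
        simp [V]
      rw [hξa]
      linarith
  have hsum : (∑ j, dist (a j) (b (σ j))) ≤ (∑ j, ξ (a j)) - ∑ j, ξ (b j) := by
    have hre : ∑ j, ξ (b j) = ∑ j, ξ (b (σ j)) :=
      (Equiv.sum_comp σ (fun j => ξ (b j))).symm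
    rw [hre, ← Finset.sum_sub_distrib]
    exact Finset.sum_le_sum fun j _ => by have := hkey j; linarith
  have hmem : ((∑ j, ξ (a j)) - ∑ j, ξ (b j)) ∈ S := ⟨ξ, hlip, rfl⟩
  rw [hinf]
  refine le_antisymm (csSup_le ⟨_, hmem⟩ hub) ?_
  exact le_trans hsum (le_csSup ⟨_, hub⟩ hmem)
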